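/- Let n ≥ 2 and let H be a complex Hadamard matrix of order n all of whose entries lie in the set {1, a} for some complex number a of absolute value 1 with a ≠ −1. Then every row of H contains the same number of entries equal to 1; in particular H is regular. -/

import Mathlib

open Matrix

/-- `H` is a complex Hadamard matrix: unimodular entries and `H Hᴴ = n • I`. -/
def IsCHadamard {n : Type*} [Fintype n] [DecidableEq n] (H : Matrix n n ℂ) : Prop :=
  (∀ i j, ‖H i j‖ = 1) ∧
    H * H.conjTranspose = (Fintype.card n : ℂ) • 1

/-- A complex Hadamard matrix is regular if the absolute value of the sum of
the entries is the same in every row. -/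
def IsRegularCH {n : Type*} [Fintype n] (H : Matrix n n ℂ) : Prop :=
  ∀ i i', ‖∑ j, H i j‖ = ‖∑ j, H i' j‖

theorem stmt5 (n : ℕ) (hn : 2 ≤ n) (a : ℂ) (ha : ‖a‖ = 1) (ha1 : a ≠ -1)
    (H : Matrix (Fin n) (Fin n) ℂ) (hHad : IsCHadamard H)
    (hent : ∀ i j, H i j = 1 ∨ H i j = a) :
    (∀ i i', (Finset.univ.filter fun j => H i j = 1).card =
      (Finset.univ.filter fun j => H i' j = 1).card) ∧ IsRegularCH H := by
  classical
  obtain ⟨huni, hmul⟩ := hHad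
  by_cases him : a.im = 0
  · -- then a = 1 and everything is trivial
    have hre : a = (a.re : ℂ) := by
      apply Complex.ext <;> simp [him]
    have habs : |a.re| = 1 := by
      rw [hre] at ha; simpa using ha
    have : a.re = 1 ∨ a.re = -1 := abs_eq (by norm_num : (0:ℝ) ≤ 1) |>.mp habs
    have haeq : a = 1 := by
      rcases this with h | h
      · rw [hre, h]; norm_num
      · exfalso; apply ha1; rw [hre, h]; norm_num
    subst haeq
    have hone : ∀ i j, H i j = 1 := fun i j => (hent i j).elim id id
    constructor
    · intro i i'
      simp [hone]
    · intro i i'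
      simp [hone]
  · -- main case
    have hent' : ∀ i j, ¬ H i j = 1 → H i j = a := fun i j h => (hent i j).resolve_left h
    have haa : a * (starRingEnd ℂ) a = 1 := by
      rw [Complex.mul_conj]
      rw [Complex.normSq_eq_norm_sq, ha]
      norm_num
    have key : ∀ i i' : Fin n, i ≠ i' →
        (Finset.univ.filter fun j => H i j = 1).card =
          (Finset.univ.filter fun j => H i' j = 1).card := by
      intro i i' hne
      have horth : ∑ j, H i j * (starRingEnd ℂ) (H i' j) = 0 := by
        have h := congrFun (congrFun hmul i) i'
        simpa [Matrix.mul_apply, Matrix.conjTranspose_apply, Matrix.one_apply, hne,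
          Matrix.smul_apply] using h
      set p := (Finset.univ.filter fun j => H i j = 1 ∧ H i' j = 1).card with hp
      set q := (Finset.univ.filter fun j => H i j = 1 ∧ ¬ H i' j = 1).card with hq
      set r := (Finset.univ.filter fun j => ¬ H i j = 1 ∧ H i' j = 1).card with hr
      set s := (Finset.univ.filter fun j => ¬ H i j = 1 ∧ ¬ H i' j = 1).card with hs
      have hA : ∑ j ∈ (Finset.univ.filter fun j => H i j = 1 ∧ H i' j = 1),
          H i j * (starRingEnd ℂ) (H i' j) = (p : ℂ) := by
        have hc : ∀ j ∈ (Finset.univ.filter fun j => H i j = 1 ∧ H i' j = 1),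
            H i j * (starRingEnd ℂ) (H i' j) = (1 : ℂ) := by
          intro j hj
          obtain ⟨-, h1, h2⟩ := Finset.mem_filter.mp hj
          rw [h1, h2]; simp
        rw [Finset.sum_congr rfl hc, Finset.sum_const, hp]; simp
      have hB : ∑ j ∈ (Finset.univ.filter fun j => H i j = 1 ∧ ¬ H i' j = 1),
          H i j * (starRingEnd ℂ) (H i' j) = (q : ℂ) * (starRingEnd ℂ) a := by
        have hc : ∀ j ∈ (Finset.univ.filter fun j => H i j = 1 ∧ ¬ H i' j = 1),
            H i j * (starRingEnd ℂ) (H i' j) = (starRingEnd ℂ) a := by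
          intro j hj
          obtain ⟨-, h1, h2⟩ := Finset.mem_filter.mp hj
          rw [h1, hent' _ _ h2]; simp
        rw [Finset.sum_congr rfl hc, Finset.sum_const, hq, nsmul_eq_mul]
      have hC : ∑ j ∈ (Finset.univ.filter fun j => ¬ H i j = 1 ∧ H i' j = 1),
          H i j * (starRingEnd ℂ) (H i' j) = (r : ℂ) * a := by
        have hc : ∀ j ∈ (Finset.univ.filter fun j => ¬ H i j = 1 ∧ H i' j = 1),
            H i j * (starRingEnd ℂ) (H i' j) = a := by
          intro j hj
          obtain ⟨-, h1, h2⟩ := Finset.mem_filter.mp hj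
          rw [hent' _ _ h1, h2]; simp
        rw [Finset.sum_congr rfl hc, Finset.sum_const, hr, nsmul_eq_mul]
      have hD : ∑ j ∈ (Finset.univ.filter fun j => ¬ H i j = 1 ∧ ¬ H i' j = 1),
          H i j * (starRingEnd ℂ) (H i' j) = (s : ℂ) := by
        have hc : ∀ j ∈ (Finset.univ.filter fun j => ¬ H i j = 1 ∧ ¬ H i' j = 1),
            H i j * (starRingEnd ℂ) (H i' j) = (1 : ℂ) := by
          intro j hj
          obtain ⟨-, h1, h2⟩ := Finset.mem_filter.mp hj
          rw [hent' _ _ h1, hent' _ _ h2, haa]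
        rw [Finset.sum_congr rfl hc, Finset.sum_const, hs]; simp
      have hsum : (p : ℂ) + q * (starRingEnd ℂ) a + ((r : ℂ) * a + s) = 0 := by
        rw [← horth,
          ← Finset.sum_filter_add_sum_filter_not Finset.univ (fun j => H i j = 1)
            (fun j => H i j * (starRingEnd ℂ) (H i' j)),
          ← Finset.sum_filter_add_sum_filter_not
            (Finset.univ.filter fun j => H i j = 1) (fun j => H i' j = 1),
          ← Finset.sum_filter_add_sum_filter_not
            (Finset.univ.filter fun j => ¬ H i j = 1) (fun j => H i' j = 1),
          Finset.filter_filter, Finset.filter_filter, Finset.filter_filter,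
          Finset.filter_filter, hA, hB, hC, hD]
      have him' : ((p : ℂ) + q * (starRingEnd ℂ) a + ((r : ℂ) * a + s)).im = 0 := by
        rw [hsum]; simp
      have hqr : (q : ℝ) * a.im = (r : ℝ) * a.im := by
        simp [Complex.add_im, Complex.mul_im] at him'
        linarith
      have hqr' : q = r := by
        have := mul_right_cancel₀ him hqr
        exact_mod_cast this
      have hk : ∀ (b c : Fin n), (Finset.univ.filter fun j => H b j = 1).card =
          (Finset.univ.filter fun j => H b j = 1 ∧ H c j = 1).card +
          (Finset.univ.filter fun j => H b j = 1 ∧ ¬ H c j = 1).card := by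
        intro b c
        rw [← Finset.filter_filter, ← Finset.filter_filter,
          Finset.card_filter_add_card_filter_not]
      rw [hk i i', hk i' i]
      have h1 : (Finset.univ.filter fun j => H i' j = 1 ∧ H i j = 1) =
          (Finset.univ.filter fun j => H i j = 1 ∧ H i' j = 1) := by
        apply Finset.filter_congr; intro j _; exact and_comm
      have h2 : (Finset.univ.filter fun j => H i' j = 1 ∧ ¬ H i j = 1) =
          (Finset.univ.filter fun j => ¬ H i j = 1 ∧ H i' j = 1) := by
        apply Finset.filter_congr; intro j _; exact and_comm
      rw [h1, h2, ← hp, ← hq, ← hr, hqr']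
    have keyall : ∀ i i' : Fin n, (Finset.univ.filter fun j => H i j = 1).card =
        (Finset.univ.filter fun j => H i' j = 1).card := by
      intro i i'
      by_cases h : i = i'
      · rw [h]
      · exact key i i' h
    refine ⟨keyall, ?_⟩
    have hrow : ∀ i : Fin n, ∑ j, H i j =
        ((Finset.univ.filter fun j => H i j = 1).card : ℂ) +
        ((Finset.univ.filter fun j => ¬ H i j = 1).card : ℂ) * a := by
      intro i
      rw [← Finset.sum_filter_add_sum_filter_not Finset.univ (fun j => H i j = 1)]
      congr 1
      · rw [Finset.sum_congr rfl (fun j hj => (Finset.mem_filter.mp hj).2), Finset.sum_const]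
        simp
      · rw [Finset.sum_congr rfl (fun j hj => hent' _ _ (Finset.mem_filter.mp hj).2),
          Finset.sum_const]
        simp [mul_comm]
    intro i i'
    have hcard : (Finset.univ.filter fun j => ¬ H i j = 1).card =
        (Finset.univ.filter fun j => ¬ H i' j = 1).card := by
      have h1 := Finset.card_filter_add_card_filter_not
        (s := Finset.univ) (p := fun j => H i j = 1)
      have h2 := Finset.card_filter_add_card_filter_not
        (s := Finset.univ) (p := fun j => H i' j = 1)
      have := keyall i i'
      omega
    rw [hrow i, hrow i', keyall i i', hcard]
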